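/- In the two-level least squares setting with the given QR decompositions, for each 1 ≤ i ≤ m the sub-blocks of A⁻¹ satisfy A¹²ᶦ = −A¹¹ (Rᵢ⁻¹ C₁ᵢ)ᵀ and A²²ᶦ = Rᵢ⁻¹ (Rᵢ⁻ᵀ − C₁ᵢ A¹²ᶦ). -/

import Mathlib

open Matrix

/-- The two-level least-squares design matrix with row blocks
`[Bᵢ | 0 … B̊ᵢ … 0]`; the rows of block `i` are indexed by `Fin q ⊕ Fin (k i)`
(so that `nᵢ = q + k i ≥ q`). -/
def twoLevelB {p q m : ℕ} {k : Fin m → ℕ}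
    (B1 : (i : Fin m) → Matrix (Fin q ⊕ Fin (k i)) (Fin p) ℝ)
    (B2 : (i : Fin m) → Matrix (Fin q ⊕ Fin (k i)) (Fin q) ℝ) :
    Matrix ((i : Fin m) × (Fin q ⊕ Fin (k i))) (Fin p ⊕ Fin m × Fin q) ℝ :=
  Matrix.of fun x y =>
    match y with
    | Sum.inl a => B1 x.1 x.2 a
    | Sum.inr (i, b) => if x.1 = i then B2 x.1 x.2 b else 0

/-- `C₀ᵢ := Qᵢᵀ Bᵢ`. -/
def C0 {p q m : ℕ} {k : Fin m → ℕ}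
    (Q1 : (i : Fin m) → Matrix (Fin q ⊕ Fin (k i)) (Fin q ⊕ Fin (k i)) ℝ)
    (B1 : (i : Fin m) → Matrix (Fin q ⊕ Fin (k i)) (Fin p) ℝ)
    (i : Fin m) : Matrix (Fin q ⊕ Fin (k i)) (Fin p) ℝ :=
  (Q1 i)ᵀ * B1 i

/-- `C₁ᵢ`: the first `q` rows of `C₀ᵢ`. -/
def C1 {p q m : ℕ} {k : Fin m → ℕ}
    (Q1 : (i : Fin m) → Matrix (Fin q ⊕ Fin (k i)) (Fin q ⊕ Fin (k i)) ℝ)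
    (B1 : (i : Fin m) → Matrix (Fin q ⊕ Fin (k i)) (Fin p) ℝ)
    (i : Fin m) : Matrix (Fin q) (Fin p) ℝ :=
  (C0 Q1 B1 i).submatrix Sum.inl id

/-- `C₂ᵢ`: the remaining `nᵢ − q` rows of `C₀ᵢ`. -/
def C2 {p q m : ℕ} {k : Fin m → ℕ}
    (Q1 : (i : Fin m) → Matrix (Fin q ⊕ Fin (k i)) (Fin q ⊕ Fin (k i)) ℝ)
    (B1 : (i : Fin m) → Matrix (Fin q ⊕ Fin (k i)) (Fin p) ℝ)
    (i : Fin m) : Matrix (Fin (k i)) (Fin p) ℝ :=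
  (C0 Q1 B1 i).submatrix Sum.inr id

/-- The row-stack of `C₂₁, …, C₂ₘ`. -/
def stackC2 {p q m : ℕ} {k : Fin m → ℕ}
    (Q1 : (i : Fin m) → Matrix (Fin q ⊕ Fin (k i)) (Fin q ⊕ Fin (k i)) ℝ)
    (B1 : (i : Fin m) → Matrix (Fin q ⊕ Fin (k i)) (Fin p) ℝ) :
    Matrix ((i : Fin m) × Fin (k i)) (Fin p) ℝ :=
  Matrix.of fun x a => C2 Q1 B1 x.1 x.2 a

private lemma isUnit_det_of_rank_eq_card' {n : Type*} [Fintype n] [DecidableEq n]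
    (A : Matrix n n ℝ) (h : A.rank = Fintype.card n) : IsUnit A.det := by
  rw [← Matrix.isUnit_iff_isUnit_det, ← Matrix.mulVec_surjective_iff_isUnit]
  have ht : LinearMap.range A.mulVecLin = ⊤ := by
    apply Submodule.eq_top_of_finrank_eq
    rw [← Matrix.rank, h, Module.finrank_pi]
  intro v
  obtain ⟨w, hw⟩ := LinearMap.range_eq_top.mp ht v
  exact ⟨w, by simpa using hw⟩

section aux
variable {p q m : ℕ} {k : Fin m → ℕ}
    (B1 : (i : Fin m) → Matrix (Fin q ⊕ Fin (k i)) (Fin p) ℝ)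
    (B2 : (i : Fin m) → Matrix (Fin q ⊕ Fin (k i)) (Fin q) ℝ)

lemma twoLevelB_apply_inl (x) (a : Fin p) :
    twoLevelB B1 B2 x (Sum.inl a) = B1 x.1 x.2 a := rfl

lemma twoLevelB_apply_inr (x) (i : Fin m) (b : Fin q) :
    twoLevelB B1 B2 x (Sum.inr (i, b)) = if x.1 = i then B2 x.1 x.2 b else 0 := rfl

lemma twoLevelA_12 (Q1 : (i : Fin m) → Matrix (Fin q ⊕ Fin (k i)) (Fin q ⊕ Fin (k i)) ℝ)
    (hQ1 : ∀ i, (Q1 i)ᵀ * Q1 i = 1) (hQ1' : ∀ i, Q1 i * (Q1 i)ᵀ = 1)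
    (R1 : (i : Fin m) → Matrix (Fin q) (Fin q) ℝ)
    (hQR1 : ∀ i, B2 i = Q1 i * Matrix.fromRows (R1 i) 0)
    (i : Fin m) (a : Fin p) (b : Fin q) :
    ((twoLevelB B1 B2)ᵀ * twoLevelB B1 B2) (Sum.inl a) (Sum.inr (i, b)) =
      ((C1 Q1 B1 i)ᵀ * R1 i) a b := by
  have hB1 : B1 i = Q1 i * C0 Q1 B1 i := by
    rw [C0, ← Matrix.mul_assoc, hQ1' i, Matrix.one_mul]
  have hC0 : C0 Q1 B1 i = Matrix.fromRows (C1 Q1 B1 i) (C2 Q1 B1 i) := by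
    ext x a; cases x <;> rfl
  have key : (B1 i)ᵀ * B2 i = (C1 Q1 B1 i)ᵀ * R1 i := by
    have hQR1i : B2 i = Q1 i * Matrix.fromRows (R1 i) (0 : Matrix (Fin (k i)) (Fin q) ℝ) :=
      hQR1 i
    rw [hB1, hQR1i, Matrix.transpose_mul, Matrix.mul_assoc,
      ← Matrix.mul_assoc (Q1 i)ᵀ, hQ1 i, Matrix.one_mul, hC0,
      Matrix.transpose_fromRows, Matrix.fromCols_mul_fromRows]
    simp
  rw [← key, Matrix.mul_apply, Matrix.mul_apply]
  rw [← Finset.univ_sigma_univ, Finset.sum_sigma]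
  simp only [Matrix.transpose_apply, twoLevelB_apply_inl, twoLevelB_apply_inr,
    mul_ite, mul_zero, Finset.sum_ite_irrel, Finset.sum_const_zero]
  rw [Finset.sum_ite_eq' Finset.univ i]
  simp

lemma twoLevelA_22 (Q1 : (i : Fin m) → Matrix (Fin q ⊕ Fin (k i)) (Fin q ⊕ Fin (k i)) ℝ)
    (hQ1 : ∀ i, (Q1 i)ᵀ * Q1 i = 1)
    (R1 : (i : Fin m) → Matrix (Fin q) (Fin q) ℝ)
    (hQR1 : ∀ i, B2 i = Q1 i * Matrix.fromRows (R1 i) 0)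
    (j i : Fin m) (a b : Fin q) :
    ((twoLevelB B1 B2)ᵀ * twoLevelB B1 B2) (Sum.inr (j, a)) (Sum.inr (i, b)) =
      if j = i then ((R1 i)ᵀ * R1 i) a b else 0 := by
  have key : ∀ l, (B2 l)ᵀ * B2 l = (R1 l)ᵀ * R1 l := by
    intro l
    have hQR1l : B2 l = Q1 l * Matrix.fromRows (R1 l) (0 : Matrix (Fin (k l)) (Fin q) ℝ) :=
      hQR1 l
    rw [hQR1l, Matrix.transpose_mul, Matrix.mul_assoc,
      ← Matrix.mul_assoc (Q1 l)ᵀ, hQ1 l, Matrix.one_mul,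
      Matrix.transpose_fromRows, Matrix.fromCols_mul_fromRows]
    simp
  rw [Matrix.mul_apply]
  rw [← Finset.univ_sigma_univ, Finset.sum_sigma]
  simp only [Matrix.transpose_apply, twoLevelB_apply_inr, ite_mul, mul_ite,
    zero_mul, mul_zero, Finset.sum_ite_irrel, Finset.sum_const_zero]
  rw [Finset.sum_ite_eq' Finset.univ i]
  simp only [Finset.mem_univ, if_true]
  by_cases h : j = i
  · subst h
    rw [if_pos rfl, if_pos rfl]
    have hk := congrFun (congrFun (key j) a) b
    simp only [Matrix.mul_apply, Matrix.transpose_apply] at hk ⊢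
    exact hk
  · rw [if_neg (Ne.symm h), if_neg h]
end aux

theorem twoLevelLS_inverse_blocks12_22 {p q m s : ℕ} {k : Fin m → ℕ}
    (hp : 0 < p) (hq : 0 < q) (hm : 0 < m)
    (B1 : (i : Fin m) → Matrix (Fin q ⊕ Fin (k i)) (Fin p) ℝ)
    (B2 : (i : Fin m) → Matrix (Fin q ⊕ Fin (k i)) (Fin q) ℝ)
    (hrank : (twoLevelB B1 B2).rank = p + m * q)
    (Q1 : (i : Fin m) → Matrix (Fin q ⊕ Fin (k i)) (Fin q ⊕ Fin (k i)) ℝ)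
    (hQ1 : ∀ i, (Q1 i)ᵀ * Q1 i = 1) (hQ1' : ∀ i, Q1 i * (Q1 i)ᵀ = 1)
    (R1 : (i : Fin m) → Matrix (Fin q) (Fin q) ℝ)
    (hR1tri : ∀ i, (R1 i).BlockTriangular id)
    (hR1 : ∀ i, IsUnit (R1 i).det)
    (hQR1 : ∀ i, B2 i = Q1 i * Matrix.fromRows (R1 i) 0)
    (Q : Matrix ((i : Fin m) × Fin (k i)) (Fin p ⊕ Fin s) ℝ)
    (hQ : Qᵀ * Q = 1) (hQ' : Q * Qᵀ = 1)
    (R : Matrix (Fin p) (Fin p) ℝ)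
    (hRtri : R.BlockTriangular id) (hR : IsUnit R.det)
    (hQR : stackC2 Q1 B1 = Q * Matrix.fromRows R 0)
    :
    ∀ i : Fin m,
      (((twoLevelB B1 B2)ᵀ * twoLevelB B1 B2)⁻¹).submatrix
          Sum.inl (fun b => Sum.inr (i, b)) =
        -((((twoLevelB B1 B2)ᵀ * twoLevelB B1 B2)⁻¹).submatrix Sum.inl Sum.inl) *
          ((R1 i)⁻¹ * C1 Q1 B1 i)ᵀ ∧
      (((twoLevelB B1 B2)ᵀ * twoLevelB B1 B2)⁻¹).submatrix
          (fun a => Sum.inr (i, a)) (fun b => Sum.inr (i, b)) =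
        (R1 i)⁻¹ * (((R1 i)ᵀ)⁻¹ - C1 Q1 B1 i *
          (((twoLevelB B1 B2)ᵀ * twoLevelB B1 B2)⁻¹).submatrix
            Sum.inl (fun b => Sum.inr (i, b))) := by
  intro i
  have hAdet : IsUnit ((twoLevelB B1 B2)ᵀ * twoLevelB B1 B2).det := by
    apply isUnit_det_of_rank_eq_card'
    rw [Matrix.rank_transpose_mul_self, hrank]
    simp
  have hAsym : ∀ x y, ((twoLevelB B1 B2)ᵀ * twoLevelB B1 B2) x y =
      ((twoLevelB B1 B2)ᵀ * twoLevelB B1 B2) y x := by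
    intro x y
    simp only [Matrix.mul_apply, Matrix.transpose_apply]
    exact Finset.sum_congr rfl fun z _ => mul_comm _ _
  have h12 := twoLevelA_12 B1 B2 Q1 hQ1 hQ1' R1 hQR1
  have h22 := twoLevelA_22 B1 B2 Q1 hQ1 R1 hQR1
  have hRRdet : IsUnit ((R1 i)ᵀ * R1 i).det := by
    rw [Matrix.det_mul, Matrix.det_transpose]
    exact (hR1 i).mul (hR1 i)
  have hRtdet : IsUnit ((R1 i)ᵀ).det := by rw [Matrix.det_transpose]; exact hR1 i
  have E1 : (((twoLevelB B1 B2)ᵀ * twoLevelB B1 B2)⁻¹).submatrix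
        Sum.inl (fun b => Sum.inr (i, b)) * ((R1 i)ᵀ * R1 i)
      = -((((twoLevelB B1 B2)ᵀ * twoLevelB B1 B2)⁻¹).submatrix Sum.inl Sum.inl *
          ((C1 Q1 B1 i)ᵀ * R1 i)) := by
    ext a b
    have h0 : (((twoLevelB B1 B2)ᵀ * twoLevelB B1 B2)⁻¹ *
        ((twoLevelB B1 B2)ᵀ * twoLevelB B1 B2)) (Sum.inl a) (Sum.inr (i, b)) = 0 := by
      rw [Matrix.nonsing_inv_mul _ hAdet]
      simp [Matrix.one_apply]
    rw [Matrix.mul_apply, Fintype.sum_sum_type, Fintype.sum_prod_type] at h0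
    simp only [h12, h22, mul_ite, mul_zero, Finset.sum_ite_irrel,
      Finset.sum_const_zero, Finset.sum_ite_eq', Finset.mem_univ, if_true] at h0
    simp only [Matrix.mul_apply] at h0
    simp only [Matrix.mul_apply, Matrix.submatrix_apply, id, Matrix.neg_apply]
    linarith [h0]
  have hX12 : (((twoLevelB B1 B2)ᵀ * twoLevelB B1 B2)⁻¹).submatrix
        Sum.inl (fun b => Sum.inr (i, b)) =
      -((((twoLevelB B1 B2)ᵀ * twoLevelB B1 B2)⁻¹).submatrix Sum.inl Sum.inl) *
        ((R1 i)⁻¹ * C1 Q1 B1 i)ᵀ := by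
    have e : (((twoLevelB B1 B2)ᵀ * twoLevelB B1 B2)⁻¹).submatrix
          Sum.inl (fun b => Sum.inr (i, b)) =
        -((((twoLevelB B1 B2)ᵀ * twoLevelB B1 B2)⁻¹).submatrix Sum.inl Sum.inl *
          ((C1 Q1 B1 i)ᵀ * R1 i)) * ((R1 i)ᵀ * R1 i)⁻¹ := by
      rw [← E1, Matrix.mul_assoc, Matrix.mul_nonsing_inv _ hRRdet, Matrix.mul_one]
    rw [e, Matrix.mul_inv_rev, Matrix.transpose_mul]
    rw [Matrix.transpose_nonsing_inv]
    simp only [Matrix.neg_mul, Matrix.mul_assoc]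
    rw [Matrix.mul_nonsing_inv_cancel_left _ _ (hR1 i)]
  refine ⟨hX12, ?_⟩
  have E2 : (R1 i)ᵀ * C1 Q1 B1 i *
        ((((twoLevelB B1 B2)ᵀ * twoLevelB B1 B2)⁻¹).submatrix
          Sum.inl (fun b => Sum.inr (i, b))) +
      ((R1 i)ᵀ * R1 i) *
        ((((twoLevelB B1 B2)ᵀ * twoLevelB B1 B2)⁻¹).submatrix
          (fun a => Sum.inr (i, a)) (fun b => Sum.inr (i, b))) = 1 := by
    ext a b
    have h0 : (((twoLevelB B1 B2)ᵀ * twoLevelB B1 B2) *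
        ((twoLevelB B1 B2)ᵀ * twoLevelB B1 B2)⁻¹) (Sum.inr (i, a)) (Sum.inr (i, b)) =
        if a = b then 1 else 0 := by
      rw [Matrix.mul_nonsing_inv _ hAdet]
      simp [Matrix.one_apply]
    have hA21 : ∀ a' : Fin p, ((twoLevelB B1 B2)ᵀ * twoLevelB B1 B2)
        (Sum.inr (i, a)) (Sum.inl a') = ((R1 i)ᵀ * C1 Q1 B1 i) a a' := by
      intro a'
      rw [hAsym, h12]
      simp only [Matrix.mul_apply, Matrix.transpose_apply]
      exact Finset.sum_congr rfl fun z _ => mul_comm _ _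
    rw [Matrix.mul_apply, Fintype.sum_sum_type, Fintype.sum_prod_type] at h0
    simp only [hA21, h22, ite_mul, zero_mul, Finset.sum_ite_irrel,
      Finset.sum_const_zero, Finset.sum_ite_eq, Finset.mem_univ, if_true] at h0
    simp only [Matrix.add_apply, Matrix.mul_apply, Matrix.submatrix_apply, id,
      Matrix.one_apply]
    rw [← h0]
    ring_nf
    congr 1
  have hsub : ((R1 i)ᵀ * R1 i) *
      ((((twoLevelB B1 B2)ᵀ * twoLevelB B1 B2)⁻¹).submatrix
        (fun a => Sum.inr (i, a)) (fun b => Sum.inr (i, b))) =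
      1 - (R1 i)ᵀ * C1 Q1 B1 i *
        ((((twoLevelB B1 B2)ᵀ * twoLevelB B1 B2)⁻¹).submatrix
          Sum.inl (fun b => Sum.inr (i, b))) := eq_sub_of_add_eq' E2
  calc (((twoLevelB B1 B2)ᵀ * twoLevelB B1 B2)⁻¹).submatrix
        (fun a => Sum.inr (i, a)) (fun b => Sum.inr (i, b))
      = ((R1 i)ᵀ * R1 i)⁻¹ * (((R1 i)ᵀ * R1 i) *
          ((((twoLevelB B1 B2)ᵀ * twoLevelB B1 B2)⁻¹).submatrix
            (fun a => Sum.inr (i, a)) (fun b => Sum.inr (i, b)))) :=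
        (Matrix.nonsing_inv_mul_cancel_left _ _ hRRdet).symm
    _ = ((R1 i)ᵀ * R1 i)⁻¹ * (1 - (R1 i)ᵀ * C1 Q1 B1 i *
          ((((twoLevelB B1 B2)ᵀ * twoLevelB B1 B2)⁻¹).submatrix
            Sum.inl (fun b => Sum.inr (i, b)))) := by rw [hsub]
    _ = (R1 i)⁻¹ * (((R1 i)ᵀ)⁻¹ - C1 Q1 B1 i *
          ((((twoLevelB B1 B2)ᵀ * twoLevelB B1 B2)⁻¹).submatrix
            Sum.inl (fun b => Sum.inr (i, b)))) := by
        rw [Matrix.mul_inv_rev]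
        simp only [Matrix.mul_sub, Matrix.mul_one, Matrix.mul_assoc]
        rw [Matrix.nonsing_inv_mul_cancel_left _ _ hRtdet]
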